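/- For the circulant Latin square L[i][j] = (i + σ⁻¹(j)) mod n built from a permutation σ of Z_n, the distance between rows r₁ and r₂ depends only on the offset δ = r₂ − r₁ (mod n) and equals the shift correlation f_σ(δ) = Σ_{j ∈ Z_n} |σ(j + δ) − σ(j)|, where the absolute value is taken of the integer representatives in {0,...,n−1}. -/
import Mathlib


open Finset

variable {n : ℕ}

/-- Shift correlation of a permutation of `ZMod n`. -/
def shiftCorr [NeZero n] (σ : Equiv.Perm (ZMod n)) (δ : ZMod n) : ℤ :=
  ∑ j : ZMod n, |((σ (j + δ)).val : ℤ) - ((σ j).val : ℤ)|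

/-- Column of symbol `s` in row `r` of the circulant Latin square
`L i j = i + σ⁻¹ j`: the inverse of the row bijection `j ↦ r + σ.symm j`. -/
def circPos (σ : Equiv.Perm (ZMod n)) (r s : ZMod n) : ZMod n :=
  (σ.symm.trans (Equiv.addLeft r)).symm s

/-- Row-pair distance of the circulant Latin square `L i j = i + σ⁻¹ j`. -/
def circDist [NeZero n] (σ : Equiv.Perm (ZMod n)) (r₁ r₂ : ZMod n) : ℤ :=
  ∑ s : ZMod n, |((circPos σ r₁ s).val : ℤ) - ((circPos σ r₂ s).val : ℤ)|

theorem circDist_eq_shiftCorr [NeZero n] (σ : Equiv.Perm (ZMod n)) (r₁ r₂ : ZMod n) :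
    circDist σ r₁ r₂ = shiftCorr σ (r₂ - r₁) := by
  unfold circDist shiftCorr circPos
  refine Fintype.sum_equiv (Equiv.subRight r₂) _ _ fun s => ?_
  have h1 : σ.symm.symm ((Equiv.addLeft r₁).symm s) = σ (Equiv.subRight r₂ s + (r₂ - r₁)) := by
    show σ (-r₁ + s) = σ (s - r₂ + (r₂ - r₁))
    congr 1; ring
  have h2 : σ.symm.symm ((Equiv.addLeft r₂).symm s) = σ (Equiv.subRight r₂ s) := by
    show σ (-r₂ + s) = σ (s - r₂)
    congr 1; ring
  simp only [Equiv.symm_trans_apply, h1, h2]
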